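/- Frequency-derivative (Hermite) interpolation, SISO k=1: let K : ℂ → ℂ^{n×n} be differentiable at σ with K(σ) invertible, b, c ∈ ℂ^n constant. Suppose V contains both K(σ)⁻¹b and d/ds[K(s)⁻¹ b]|_{s=σ} in its column span, W contains K(σ)^{-H}c, K̂(σ) := W^H K(σ) V is invertible, and K̂ is differentiable at σ. Then d/ds [c^H K(s)⁻¹ b]|_{s=σ} = d/ds [(c^H V) K̂(s)⁻¹ (W^H b)]|_{s=σ}. -/

import Mathlib

open Matrix

attribute [local instance] Matrix.linftyOpNormedAddCommGroup Matrix.linftyOpNormedSpace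
  Matrix.linftyOpNormedRing Matrix.linftyOpNormedAlgebra

namespace SisoHermiteAux

/-- The identity, as a continuous linear map from pi functions to matrices. -/
noncomputable def toMat (n m : ℕ) : (Fin n → Fin m → ℂ) →L[ℂ] Matrix (Fin n) (Fin m) ℂ :=
  LinearMap.toContinuousLinearMap
    { toFun := Matrix.of
      map_add' := fun _ _ => rfl
      map_smul' := fun _ _ => rfl }

lemma hasDerivAt_matrix {n m : ℕ} {K : ℂ → Matrix (Fin n) (Fin m) ℂ} {σ : ℂ}
    (h : ∀ i j, DifferentiableAt ℂ (fun s => K s i j) σ) :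
    HasDerivAt K (Matrix.of fun i j => deriv (fun s => K s i j) σ) σ := by
  have hg : HasDerivAt (fun s => fun i j => K s i j)
      (fun i j => deriv (fun s => K s i j) σ) σ := by
    rw [hasDerivAt_pi]
    intro i
    rw [hasDerivAt_pi]
    intro j
    exact (h i j).hasDerivAt
  exact (toMat n m).hasFDerivAt.comp_hasDerivAt σ hg

lemma hasDerivAt_inv_matrix {n : ℕ} {K : ℂ → Matrix (Fin n) (Fin n) ℂ} {σ : ℂ}
    {K' : Matrix (Fin n) (Fin n) ℂ}
    (hK : IsUnit (K σ).det) (hd : HasDerivAt K K' σ) :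
    HasDerivAt (fun s => (K s)⁻¹) (-((K σ)⁻¹ * K' * (K σ)⁻¹)) σ := by
  obtain ⟨u, hu'⟩ := (Matrix.isUnit_iff_isUnit_det _).mpr hK
  have h0 : HasFDerivAt Ring.inverse
      (-(ContinuousLinearMap.mulLeftRight ℂ _ (↑u⁻¹) (↑u⁻¹))) (K σ) := hu' ▸
    hasFDerivAt_ringInverse u
  have h1 := h0.comp_hasDerivAt σ hd
  have hinv : (↑u⁻¹ : Matrix (Fin n) (Fin n) ℂ) = (K σ)⁻¹ := by
    rw [Matrix.nonsing_inv_eq_ringInverse, ← hu', Ring.inverse_unit]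
  have h2 : Ring.inverse ∘ K = fun s => (K s)⁻¹ := by
    funext s; exact (Matrix.nonsing_inv_eq_ringInverse _).symm
  rw [h2] at h1
  convert h1 using 1
  · rfl
  · rfl
  · rfl
  simp [hinv]

/-- `M ↦ u ⬝ᵥ (M *ᵥ v)` as a continuous linear map. -/
noncomputable def dotCLM {m : ℕ} (u v : Fin m → ℂ) : Matrix (Fin m) (Fin m) ℂ →L[ℂ] ℂ :=
  LinearMap.toContinuousLinearMap
    { toFun := fun M => u ⬝ᵥ (M *ᵥ v)
      map_add' := by intros; simp [Matrix.add_mulVec]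
      map_smul' := by intros; simp [Matrix.smul_mulVec] }

/-- `M ↦ P * M * Q` as a continuous linear map. -/
noncomputable def sandCLM {n r : ℕ} (P : Matrix (Fin r) (Fin n) ℂ) (Q : Matrix (Fin n) (Fin r) ℂ) :
    Matrix (Fin n) (Fin n) ℂ →L[ℂ] Matrix (Fin r) (Fin r) ℂ :=
  LinearMap.toContinuousLinearMap
    { toFun := fun M => P * M * Q
      map_add' := by intros; simp [Matrix.mul_add, Matrix.add_mul]
      map_smul' := by intros; simp [Matrix.mul_smul, Matrix.smul_mul] }

end SisoHermiteAux

/-- Hermite (frequency-derivative) interpolation of the first transfer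
function `G₁(s) = cᴴ K(s)⁻¹ b` at `σ` (Theorem 2 with k = 1, ℓ₁ = 1). -/
theorem siso_hermite_interpolation {n r : ℕ}
    (K : ℂ → Matrix (Fin n) (Fin n) ℂ)
    (b c : Fin n → ℂ) (V W : Matrix (Fin n) (Fin r) ℂ) (σ : ℂ)
    (hdiff : ∀ i j, DifferentiableAt ℂ (fun s => K s i j) σ)
    (hK : IsUnit (K σ).det)
    (hv0 : ∃ y : Fin r → ℂ, V *ᵥ y = (K σ)⁻¹ *ᵥ b)
    (hv1 : ∃ y : Fin r → ℂ, V *ᵥ y = deriv (fun s => (K s)⁻¹ *ᵥ b) σ)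
    (hw : ∃ y : Fin r → ℂ, W *ᵥ y = ((K σ)ᴴ)⁻¹ *ᵥ c)
    (hKhat : IsUnit (Wᴴ * K σ * V).det)
    (hKhatdiff : ∀ i j, DifferentiableAt ℂ (fun s => (Wᴴ * K s * V) i j) σ) :
    deriv (fun s => star c ⬝ᵥ ((K s)⁻¹ *ᵥ b)) σ =
      deriv (fun s => (star c ᵥ* V) ⬝ᵥ ((Wᴴ * K s * V)⁻¹ *ᵥ (Wᴴ *ᵥ b))) σ := by
  classical
  obtain ⟨y0, hy0⟩ := hv0
  obtain ⟨yw, hyw⟩ := hw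
  set A : Matrix (Fin n) (Fin n) ℂ := (K σ)⁻¹ with hA
  set H : Matrix (Fin r) (Fin r) ℂ := Wᴴ * K σ * V with hH
  set K' : Matrix (Fin n) (Fin n) ℂ :=
    Matrix.of (fun i j => deriv (fun s => K s i j) σ) with hK'
  have hKd : HasDerivAt K K' σ := SisoHermiteAux.hasDerivAt_matrix hdiff
  have hinv := SisoHermiteAux.hasDerivAt_inv_matrix hK hKd
  have hf : HasDerivAt (fun s => star c ⬝ᵥ ((K s)⁻¹ *ᵥ b))
      (star c ⬝ᵥ ((-(A * K' * A)) *ᵥ b)) σ :=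
    (SisoHermiteAux.dotCLM (star c) b).hasFDerivAt.comp_hasDerivAt σ hinv
  have hKhatd : HasDerivAt (fun s => Wᴴ * K s * V) (Wᴴ * K' * V) σ :=
    (SisoHermiteAux.sandCLM Wᴴ V).hasFDerivAt.comp_hasDerivAt σ hKd
  have hinv2 := SisoHermiteAux.hasDerivAt_inv_matrix hKhat hKhatd
  have hg : HasDerivAt (fun s => (star c ᵥ* V) ⬝ᵥ ((Wᴴ * K s * V)⁻¹ *ᵥ (Wᴴ *ᵥ b)))
      ((star c ᵥ* V) ⬝ᵥ ((-(H⁻¹ * (Wᴴ * K' * V) * H⁻¹)) *ᵥ (Wᴴ *ᵥ b))) σ :=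
    (SisoHermiteAux.dotCLM (star c ᵥ* V) (Wᴴ *ᵥ b)).hasFDerivAt.comp_hasDerivAt σ hinv2
  rw [hf.deriv, hg.deriv]
  -- now pure linear algebra
  have hA1 : K σ * A = 1 := Matrix.mul_nonsing_inv _ hK
  have hA2 : A * K σ = 1 := Matrix.nonsing_inv_mul _ hK
  have h1 : H⁻¹ *ᵥ (Wᴴ *ᵥ b) = y0 := by
    have e1 : H *ᵥ y0 = Wᴴ *ᵥ b := by
      calc (Wᴴ * K σ * V) *ᵥ y0 = Wᴴ *ᵥ (K σ *ᵥ (V *ᵥ y0)) := by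
            rw [Matrix.mulVec_mulVec, Matrix.mulVec_mulVec]
        _ = Wᴴ *ᵥ ((K σ * A) *ᵥ b) := by
            rw [hy0]; simp only [Matrix.mulVec_mulVec, Matrix.mul_assoc]
        _ = Wᴴ *ᵥ b := by rw [hA1, Matrix.one_mulVec]
    rw [← e1, Matrix.mulVec_mulVec, Matrix.nonsing_inv_mul _ hKhat, Matrix.one_mulVec]
  have hsw : star yw ᵥ* Wᴴ = star c ᵥ* A := by
    rw [← Matrix.star_mulVec, hyw, Matrix.star_mulVec, ← Matrix.conjTranspose_nonsing_inv,
      Matrix.conjTranspose_conjTranspose]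
  have h2 : (star c ᵥ* V) ᵥ* H⁻¹ = star yw := by
    have e2 : star yw ᵥ* H = star c ᵥ* V := by
      calc star yw ᵥ* (Wᴴ * K σ * V) = ((star yw ᵥ* Wᴴ) ᵥ* K σ) ᵥ* V := by
            simp only [Matrix.vecMul_vecMul, Matrix.mul_assoc]
        _ = (star c ᵥ* (A * K σ)) ᵥ* V := by
            rw [hsw]; simp only [Matrix.vecMul_vecMul, Matrix.mul_assoc]
        _ = star c ᵥ* V := by rw [hA2, Matrix.vecMul_one]
    rw [← e2, Matrix.vecMul_vecMul, Matrix.mul_nonsing_inv _ hKhat, Matrix.vecMul_one]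
  -- final computation
  rw [Matrix.neg_mulVec, Matrix.neg_mulVec, dotProduct_neg, dotProduct_neg]
  congr 1
  calc star c ⬝ᵥ ((A * K' * A) *ᵥ b)
      = ((star c ᵥ* A) ᵥ* K') ⬝ᵥ (A *ᵥ b) := by
        rw [← Matrix.mulVec_mulVec, Matrix.dotProduct_mulVec, ← Matrix.vecMul_vecMul]
    _ = (((star c ᵥ* V) ᵥ* H⁻¹ ᵥ* Wᴴ) ᵥ* K') ⬝ᵥ (V *ᵥ y0) := by rw [h2, hsw, hy0]
    _ = (star c ᵥ* V) ⬝ᵥ ((H⁻¹ * (Wᴴ * K' * V) * H⁻¹) *ᵥ (Wᴴ *ᵥ b)) := by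
        rw [← Matrix.mulVec_mulVec, h1, Matrix.dotProduct_mulVec, Matrix.dotProduct_mulVec]
        simp only [Matrix.vecMul_vecMul, Matrix.mul_assoc]
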